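/- In the Z-module Z ⊕ Z, the submodule N = 2Z ⊕ 2Z is a prime submodule but is not strongly irreducible. -/
import Mathlib


/-- In the `ℤ`-module `ℤ × ℤ`, the submodule `N = 2ℤ × 2ℤ` is a prime submodule
but is not strongly irreducible. -/
theorem prime_not_strongly_irreducible_example :
    letI N : Submodule ℤ (ℤ × ℤ) :=
      Submodule.prod (Ideal.span {(2 : ℤ)}) (Ideal.span {(2 : ℤ)})
    -- N is a prime submodule
    (N ≠ ⊤ ∧ ∀ (a : ℤ) (m : ℤ × ℤ), a • m ∈ N → (∀ x : ℤ × ℤ, a • x ∈ N) ∨ m ∈ N) ∧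
    -- N is not strongly irreducible
    ¬ (∀ K L : Submodule ℤ (ℤ × ℤ), K ⊓ L ≤ N → K ≤ N ∨ L ≤ N) := by
  constructor
  · constructor
    · intro h
      have h1 : (1, 1) ∈ Submodule.prod (Ideal.span {(2 : ℤ)}) (Ideal.span {(2 : ℤ)}) := by
        rw [h]; trivial
      rw [Submodule.mem_prod, Ideal.mem_span_singleton] at h1
      omega
    · intro a m hm
      rw [Submodule.mem_prod, Ideal.mem_span_singleton, Ideal.mem_span_singleton] at hm
      simp only [Prod.smul_fst, Prod.smul_snd, smul_eq_mul] at hm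
      by_cases ha : (2 : ℤ) ∣ a
      · left
        intro x
        rw [Submodule.mem_prod, Ideal.mem_span_singleton, Ideal.mem_span_singleton]
        simp only [Prod.smul_fst, Prod.smul_snd, smul_eq_mul]
        exact ⟨ha.mul_right _, ha.mul_right _⟩
      · right
        rw [Submodule.mem_prod, Ideal.mem_span_singleton, Ideal.mem_span_singleton]
        have p2 : Prime (2 : ℤ) := Int.prime_two
        constructor
        · rcases p2.dvd_mul.mp hm.1 with h | h
          · exact absurd h ha
          · exact h
        · rcases p2.dvd_mul.mp hm.2 with h | h
          · exact absurd h ha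
          · exact h
  · intro h
    have hle : (Submodule.prod ⊤ ⊥ : Submodule ℤ (ℤ × ℤ)) ⊓ Submodule.prod ⊥ ⊤ ≤
        Submodule.prod (Ideal.span {(2 : ℤ)}) (Ideal.span {(2 : ℤ)}) := by
      intro x hx
      simp only [Submodule.mem_inf, Submodule.mem_prod, Submodule.mem_bot,
        Submodule.mem_top, true_and, and_true] at hx
      rw [Submodule.mem_prod, Ideal.mem_span_singleton, Ideal.mem_span_singleton,
        hx.1, hx.2]
      exact ⟨dvd_zero _, dvd_zero _⟩
    rcases h (Submodule.prod ⊤ ⊥) (Submodule.prod ⊥ ⊤) hle with hK | hK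
    · have := hK (x := ((1 : ℤ), (0 : ℤ)))
        (by rw [Submodule.mem_prod]; exact ⟨trivial, rfl⟩)
      rw [Submodule.mem_prod, Ideal.mem_span_singleton] at this
      omega
    · have := hK (x := ((0 : ℤ), (1 : ℤ)))
        (by rw [Submodule.mem_prod]; exact ⟨rfl, trivial⟩)
      rw [Submodule.mem_prod, Ideal.mem_span_singleton, Ideal.mem_span_singleton] at this
      omega
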